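/- Let A be an invertible r×r complex matrix, γ > 0, q ∈ ℂ with γq ≠ 1. Define N(q) = (1 − γq)I, θ(q) = (1−γq)^{-1}I, and M(q) = θ(q)(I − qA) + γ(I − θ(q))(A^{-1} − qI). Then the iteration matrix Z(q) := I − N(q)^{-1} M(q) satisfies Z(q) = [q/(1−γq)^2] · A^{-1}(A − γI)^2. -/
import Mathlib

theorem blended_iteration_matrix (r : ℕ) (hr : 0 < r)
    (A : Matrix (Fin r) (Fin r) ℂ) (hA : IsUnit A.det)
    (γ : ℝ) (hγ : 0 < γ) (q : ℂ) (hq : (γ : ℂ) * q ≠ 1)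
    (N θ M Z : Matrix (Fin r) (Fin r) ℂ)
    (hN : N = (1 - (γ : ℂ) * q) • (1 : Matrix (Fin r) (Fin r) ℂ))
    (hθ : θ = (1 - (γ : ℂ) * q)⁻¹ • (1 : Matrix (Fin r) (Fin r) ℂ))
    (hM : M = θ * (1 - q • A) + (γ : ℂ) • ((1 - θ) * (A⁻¹ - q • (1 : Matrix (Fin r) (Fin r) ℂ))))
    (hZ : Z = 1 - N⁻¹ * M) :
    Z = (q / (1 - (γ : ℂ) * q) ^ 2) • (A⁻¹ * (A - (γ : ℂ) • (1 : Matrix (Fin r) (Fin r) ℂ)) ^ 2) := by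
  set c : ℂ := 1 - (γ : ℂ) * q with hc
  have hc0 : c ≠ 0 := sub_ne_zero.mpr (Ne.symm hq)
  have hAi : A⁻¹ * A = 1 := Matrix.nonsing_inv_mul A hA
  have hNi : N⁻¹ = c⁻¹ • (1 : Matrix (Fin r) (Fin r) ℂ) := by
    rw [hN, Matrix.inv_eq_right_inv]
    simp [Matrix.smul_mul, Matrix.mul_smul, smul_smul, mul_inv_cancel₀ hc0, inv_mul_cancel₀ hc0]
  have hX : A⁻¹ * (A - (γ : ℂ) • (1 : Matrix (Fin r) (Fin r) ℂ)) ^ 2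
      = A - ((2 * γ : ℂ)) • (1 : Matrix (Fin r) (Fin r) ℂ) + ((γ : ℂ) ^ 2) • A⁻¹ := by
    have h2 : (A - (γ : ℂ) • (1 : Matrix (Fin r) (Fin r) ℂ)) ^ 2
        = A * A - (2 * γ : ℂ) • A + ((γ : ℂ) ^ 2) • (1 : Matrix (Fin r) (Fin r) ℂ) := by
      rw [sq]
      simp only [Matrix.sub_mul, Matrix.mul_sub, Matrix.smul_mul, Matrix.mul_smul, smul_smul,
        mul_one, one_mul, Matrix.mul_one, Matrix.one_mul]
      module
    rw [h2]
    simp only [Matrix.mul_add, Matrix.mul_sub, Matrix.mul_smul, Matrix.mul_one, ← mul_assoc, hAi,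
      Matrix.one_mul]
  rw [hZ, hNi, hM, hθ, hX]
  simp only [Matrix.smul_mul, Matrix.mul_smul, Matrix.mul_sub, Matrix.sub_mul, Matrix.mul_add,
    Matrix.add_mul, Matrix.one_mul, Matrix.mul_one, smul_smul, smul_sub, smul_add, sub_smul,
    add_smul, one_smul]
  match_scalars
  all_goals (field_simp; try ring)
  all_goals tauto
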